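/- Fix an integer n ≥ 2, w̄ > 0, φ ≠ 0 satisfying Assumption 1, κ > 0, ĝ ∈ 𝒢ₙ and â ∈ ℝⁿ. Define V*_single(ĝ, â, C) = sup { aᵀ (I − φĝ)⁻² a : a ∈ ℝⁿ, ‖a − â‖² ≤ C } and V*_joint(ĝ, â, C) = sup { aᵀ (I − φg)⁻² a : a ∈ ℝⁿ, g ∈ 𝒢ₙ, κ‖g − ĝ‖_F² + ‖a − â‖² ≤ C }. Then: (i) V*_joint(ĝ, â, C) ≥ V*_single(ĝ, â, C) for every C ≥ 0; (ii) if φ > 0, then lim_{C→∞} V*_joint(ĝ, â, C)/V*_single(ĝ, â, C) = ((1 − φλ₁(ĝ))/(1 − (n−1)φw̄))², where λ₁(ĝ) is the largest eigenvalue of ĝ; and (iii) if φ < 0, then lim_{C→∞} V*_joint(ĝ, â, C)/V*_single(ĝ, â, C) = ((1 − φλ_n(ĝ))/(1 + φw̄√(⌊n/2⌋⌈n/2⌉)))², where λ_n(ĝ) is the smallest eigenvalue of ĝ. -/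

import Mathlib

open Matrix Finset Filter

/-- `μ` is a (real) eigenvalue of the matrix `M`. -/
def hasEigen {n : ℕ} (M : Matrix (Fin n) (Fin n) ℝ) (μ : ℝ) : Prop :=
  ∃ v : Fin n → ℝ, v ≠ 0 ∧ M.mulVec v = μ • v

/-- The set `𝒢ₙ` of symmetric `n×n` networks with zero diagonal and weights in `[0, w̄]`. -/
def Gset (n : ℕ) (w : ℝ) : Set (Matrix (Fin n) (Fin n) ℝ) :=
  {g | g.IsSymm ∧ (∀ i, g i i = 0) ∧ ∀ i j, 0 ≤ g i j ∧ g i j ≤ w}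

lemma myTendsto_sqrt_atTop : Tendsto Real.sqrt atTop atTop := by
  apply tendsto_atTop_atTop.2
  intro b
  refine ⟨b ^ 2, fun a ha => ?_⟩
  calc b ≤ |b| := le_abs_self b
    _ = Real.sqrt (b ^ 2) := (Real.sqrt_sq_eq_abs b).symm
    _ ≤ Real.sqrt a := Real.sqrt_le_sqrt ha

lemma myTendsto_sq_ratio (a : ℝ) :
    Tendsto (fun C : ℝ => (Real.sqrt C + a) ^ 2 / C) atTop (nhds 1) := by
  have h1 : Tendsto (fun C : ℝ => 1 + a * (Real.sqrt C)⁻¹) atTop (nhds 1) := by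
    have h0 : Tendsto (fun C : ℝ => a * (Real.sqrt C)⁻¹) atTop (nhds 0) := by
      simpa using (myTendsto_sqrt_atTop.inv_tendsto_atTop).const_mul a
    simpa using (tendsto_const_nhds (x := (1:ℝ))).add h0
  have h2 : Tendsto (fun C : ℝ => (1 + a * (Real.sqrt C)⁻¹) ^ 2) atTop (nhds 1) := by
    simpa using h1.pow 2
  refine h2.congr' ?_
  filter_upwards [eventually_gt_atTop 0] with C hC
  have hs : 0 < Real.sqrt C := Real.sqrt_pos.2 hC
  have hC' : Real.sqrt C ^ 2 = C := Real.sq_sqrt hC.le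
  field_simp
  rw [hC']; ring

lemma div_div_div_same (x y c : ℝ) (hc : c ≠ 0) : (x / c) / (y / c) = x / y := by
  rcases eq_or_ne y 0 with h | h
  · simp [h]
  · field_simp


lemma my_sum_mul_le (n : ℕ) (x y : Fin n → ℝ) :
    ∑ i, x i * y i ≤ Real.sqrt (∑ i, x i ^ 2) * Real.sqrt (∑ i, y i ^ 2) := by
  have h := Finset.sum_mul_sq_le_sq_mul_sq Finset.univ x y
  have h1 : ∑ i, x i * y i ≤ |∑ i, x i * y i| := le_abs_self _
  have h2 : |∑ i, x i * y i| = Real.sqrt ((∑ i, x i * y i) ^ 2) :=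
    (Real.sqrt_sq_eq_abs _).symm
  rw [h2] at h1
  refine h1.trans ?_
  rw [← Real.sqrt_mul_self (by positivity : (0:ℝ) ≤ Real.sqrt (∑ i, x i ^ 2) * Real.sqrt (∑ i, y i ^ 2))]
  · rw [show Real.sqrt (∑ i, x i ^ 2) * Real.sqrt (∑ i, y i ^ 2) * (Real.sqrt (∑ i, x i ^ 2) * Real.sqrt (∑ i, y i ^ 2)) = (Real.sqrt (∑ i, x i ^ 2) * Real.sqrt (∑ i, x i ^ 2)) * (Real.sqrt (∑ i, y i ^ 2) * Real.sqrt (∑ i, y i ^ 2)) by ring,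
      Real.mul_self_sqrt (by positivity), Real.mul_self_sqrt (by positivity)]
    exact Real.sqrt_le_sqrt h

/-- triangle-type inequality for sums of squares -/
lemma my_sum_sq_add_le (n : ℕ) (x y : Fin n → ℝ) :
    ∑ i, (x i + y i) ^ 2 ≤ (Real.sqrt (∑ i, x i ^ 2) + Real.sqrt (∑ i, y i ^ 2)) ^ 2 := by
  have hx : Real.sqrt (∑ i, x i ^ 2) ^ 2 = ∑ i, x i ^ 2 := Real.sq_sqrt (by positivity)
  have hy : Real.sqrt (∑ i, y i ^ 2) ^ 2 = ∑ i, y i ^ 2 := Real.sq_sqrt (by positivity)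
  have h := my_sum_mul_le n x y
  calc ∑ i, (x i + y i) ^ 2 = (∑ i, x i ^ 2) + 2 * (∑ i, x i * y i) + ∑ i, y i ^ 2 := by
        rw [Finset.mul_sum, ← Finset.sum_add_distrib, ← Finset.sum_add_distrib]
        exact Finset.sum_congr rfl fun i _ => by ring
    _ ≤ (∑ i, x i ^ 2) + 2 * (Real.sqrt (∑ i, x i ^ 2) * Real.sqrt (∑ i, y i ^ 2)) + ∑ i, y i ^ 2 := by
        linarith
    _ = (Real.sqrt (∑ i, x i ^ 2) + Real.sqrt (∑ i, y i ^ 2)) ^ 2 := by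
        rw [add_sq, hx, hy]; ring

lemma my_sqrt_sum_le (n : ℕ) (x y : Fin n → ℝ) :
    Real.sqrt (∑ i, (x i + y i) ^ 2)
      ≤ Real.sqrt (∑ i, x i ^ 2) + Real.sqrt (∑ i, y i ^ 2) := by
  have h := my_sum_sq_add_le n x y
  calc Real.sqrt (∑ i, (x i + y i) ^ 2) ≤ Real.sqrt ((Real.sqrt (∑ i, x i ^ 2) + Real.sqrt (∑ i, y i ^ 2)) ^ 2) := Real.sqrt_le_sqrt h
    _ = _ := by rw [Real.sqrt_sq (by positivity)]


lemma my_int_pq (a b k r : ℤ) (h : a + b ≤ 2 * k + r) (hr : 0 ≤ r) (hr1 : r ≤ 1)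
    (ha : 0 ≤ a) (hb : 0 ≤ b) : a * b ≤ k * (k + r) := by
  rcases le_or_gt a k with hak | hak
  · nlinarith [sq_nonneg (k - a), mul_nonneg hr (sub_nonneg.2 hak)]
  · have hbk : b ≤ k := by omega
    nlinarith [sq_nonneg (k - b), mul_nonneg hr (sub_nonneg.2 hbk)]

lemma my_nat_pq (a b n : ℕ) (h : a + b ≤ n) : a * b ≤ (n / 2) * ((n + 1) / 2) := by
  have key : ((a : ℤ)) * (b : ℤ) ≤ ((n / 2 : ℕ) : ℤ) * (((n / 2 : ℕ) : ℤ) + ((n % 2 : ℕ) : ℤ)) :=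
    my_int_pq a b (n / 2 : ℕ) (n % 2 : ℕ) (by push_cast; omega)
      (by positivity) (by exact_mod_cast Nat.le_of_lt_succ (Nat.mod_lt _ (by norm_num)))
      (by positivity) (by positivity)
  have h1 : ((n + 1) / 2 : ℕ) = (n / 2 : ℕ) + (n % 2 : ℕ) := by omega
  have : ((a : ℤ)) * (b : ℤ) ≤ ((n / 2 : ℕ) : ℤ) * (((n + 1) / 2 : ℕ) : ℤ) := by
    rw [h1, Nat.cast_add]; exact key
  exact_mod_cast this

/-- upper quadratic bound for nonnegative symmetric zero-diagonal matrices -/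
lemma my_quad_le {n : ℕ} {w : ℝ} (hw : 0 ≤ w) {g : Matrix (Fin n) (Fin n) ℝ}
    (hg : g ∈ Gset n w) (v : Fin n → ℝ) :
    v ⬝ᵥ (g *ᵥ v) ≤ ((n : ℝ) - 1) * w * (v ⬝ᵥ v) := by
  obtain ⟨hsym, hdiag, hbd⟩ := hg
  have hdot : v ⬝ᵥ v = ∑ i, v i ^ 2 := by
    simp [dotProduct, sq]
  calc v ⬝ᵥ (g *ᵥ v) = ∑ i, ∑ j, g i j * (v i * v j) := by
        simp only [dotProduct, Matrix.mulVec, Finset.mul_sum]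
        exact Finset.sum_congr rfl fun i _ => Finset.sum_congr rfl fun j _ => by ring
    _ ≤ ∑ i, ∑ j, (if i = j then 0 else w) * (|v i| * |v j|) := by
        refine Finset.sum_le_sum fun i _ => Finset.sum_le_sum fun j _ => ?_
        rcases eq_or_ne i j with rfl | hij
        · simp [hdiag i]
        · rw [if_neg hij]
          calc g i j * (v i * v j) ≤ g i j * |v i * v j| :=
                mul_le_mul_of_nonneg_left (le_abs_self _) (hbd i j).1
            _ ≤ w * (|v i| * |v j|) := by
                rw [abs_mul]
                exact mul_le_mul_of_nonneg_right (hbd i j).2 (by positivity)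
    _ = w * ((∑ i, |v i|) ^ 2 - ∑ i, v i ^ 2) := by
        have hsplit : ∀ i j : Fin n, (if i = j then (0:ℝ) else w) * (|v i| * |v j|)
            = w * (|v i| * |v j|) - (if i = j then w * (|v i| * |v j|) else 0) := by
          intro i j; split <;> ring
        simp only [hsplit]
        rw [Finset.sum_congr rfl fun i (_ : i ∈ univ) => Finset.sum_sub_distrib _ _,
          Finset.sum_sub_distrib]
        have e1 : ∑ i : Fin n, ∑ j : Fin n, w * (|v i| * |v j|)
            = w * ((∑ i, |v i|) ^ 2) := by
          rw [sq, Finset.sum_mul_sum, Finset.mul_sum]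
          exact Finset.sum_congr rfl fun i _ => by
            rw [Finset.mul_sum]
        have e2 : ∑ i : Fin n, ∑ j : Fin n, (if i = j then w * (|v i| * |v j|) else 0)
            = w * ∑ i, v i ^ 2 := by
          rw [Finset.mul_sum]
          refine Finset.sum_congr rfl fun i _ => ?_
          rw [Finset.sum_ite_eq univ i (fun j => w * (|v i| * |v j|)), if_pos (mem_univ i),
            abs_mul_abs_self, sq]
        rw [e1, e2, mul_sub]
    _ ≤ w * (((n : ℝ) - 1) * ∑ i, v i ^ 2) := by
        refine mul_le_mul_of_nonneg_left ?_ hw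
        have hcs : (∑ i, |v i|) ^ 2 ≤ ((n:ℝ)) * ∑ i, |v i| ^ 2 := by
          have := sq_sum_le_card_mul_sum_sq (s := (univ : Finset (Fin n))) (f := fun i => |v i|)
          simpa using this
        have habs : ∑ i, |v i| ^ 2 = ∑ i, v i ^ 2 :=
          Finset.sum_congr rfl fun i _ => sq_abs _
        rw [habs] at hcs
        have hpos : (0:ℝ) ≤ ∑ i, v i ^ 2 := by positivity
        nlinarith
    _ = ((n : ℝ) - 1) * w * (v ⬝ᵥ v) := by rw [hdot]; ring


/-- lower quadratic bound for nonnegative symmetric zero-diagonal matrices -/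
lemma my_quad_ge {n : ℕ} {w : ℝ} (hw : 0 ≤ w) {g : Matrix (Fin n) (Fin n) ℝ}
    (hg : g ∈ Gset n w) (v : Fin n → ℝ) :
    -(w * Real.sqrt (((n / 2 : ℕ) : ℝ) * (((n + 1) / 2 : ℕ) : ℝ))) * (v ⬝ᵥ v)
      ≤ v ⬝ᵥ (g *ᵥ v) := by
  obtain ⟨hsym, hdiag, hbd⟩ := hg
  set P : Fin n → ℝ := fun i => max (v i) 0 with hPdef
  set N : Fin n → ℝ := fun i => max (-(v i)) 0 with hNdef
  have hP0 : ∀ i, 0 ≤ P i := fun i => le_max_right _ _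
  have hN0 : ∀ i, 0 ≤ N i := fun i => le_max_right _ _
  have hv : ∀ i, v i = P i - N i := by
    intro i; simp only [hPdef, hNdef]
    rcases le_or_gt 0 (v i) with h | h
    · rw [max_eq_left h, max_eq_right (by linarith)]; ring
    · rw [max_eq_right h.le, max_eq_left (by linarith)]; ring
  have hsq : ∀ i, P i ^ 2 + N i ^ 2 = v i ^ 2 := by
    intro i; simp only [hPdef, hNdef]
    rcases le_or_gt 0 (v i) with h | h
    · rw [max_eq_left h, max_eq_right (by linarith)]; ring
    · rw [max_eq_right h.le, max_eq_left (by linarith)]; ring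
  have hdot : v ⬝ᵥ v = ∑ i, v i ^ 2 := by simp [dotProduct, sq]
  -- Step 1
  have step1 : -(v ⬝ᵥ (g *ᵥ v)) ≤ w * (2 * ((∑ i, P i) * (∑ i, N i))) := by
    have hexp : -(v ⬝ᵥ (g *ᵥ v)) = ∑ i, ∑ j, g i j * (-(v i * v j)) := by
      rw [show v ⬝ᵥ (g *ᵥ v) = ∑ i, ∑ j, g i j * (v i * v j) by
        simp only [dotProduct, Matrix.mulVec, Finset.mul_sum]
        exact Finset.sum_congr rfl fun i _ => Finset.sum_congr rfl fun j _ => by ring]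
      rw [← Finset.sum_neg_distrib]
      exact Finset.sum_congr rfl fun i _ => by
        rw [← Finset.sum_neg_distrib]
        exact Finset.sum_congr rfl fun j _ => by ring
    rw [hexp]
    calc ∑ i, ∑ j, g i j * (-(v i * v j))
        ≤ ∑ i, ∑ j, w * (P i * N j + N i * P j) := by
          refine Finset.sum_le_sum fun i _ => Finset.sum_le_sum fun j _ => ?_
          have hR : 0 ≤ P i * N j + N i * P j := by positivity
          have hle : -(v i * v j) ≤ P i * N j + N i * P j := by
            rw [hv i, hv j]
            nlinarith [mul_nonneg (hP0 i) (hP0 j), mul_nonneg (hN0 i) (hN0 j)]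
          rcases le_or_gt (-(v i * v j)) 0 with h | h
          · exact (mul_nonpos_of_nonneg_of_nonpos (hbd i j).1 h).trans (by positivity)
          · calc g i j * (-(v i * v j)) ≤ w * (-(v i * v j)) :=
                  mul_le_mul_of_nonneg_right (hbd i j).2 h.le
              _ ≤ w * (P i * N j + N i * P j) := mul_le_mul_of_nonneg_left hle hw
      _ = w * (((∑ i, P i) * (∑ j, N j)) + ((∑ i, N i) * (∑ j, P j))) := by
          rw [Finset.sum_mul_sum (univ : Finset (Fin n)) (univ : Finset (Fin n)) P N,
            Finset.sum_mul_sum (univ : Finset (Fin n)) (univ : Finset (Fin n)) N P,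
            ← Finset.sum_add_distrib, Finset.mul_sum]
          refine Finset.sum_congr rfl fun i _ => ?_
          rw [← Finset.sum_add_distrib, Finset.mul_sum]
      _ = w * (2 * ((∑ i, P i) * (∑ i, N i))) := by ring
  -- Step 2
  have step2 : 2 * ((∑ i, P i) * (∑ i, N i))
      ≤ Real.sqrt (((n / 2 : ℕ) : ℝ) * (((n + 1) / 2 : ℕ) : ℝ)) * ∑ i, v i ^ 2 := by
    set Pos := univ.filter (fun i : Fin n => 0 < v i) with hPosdef
    set Neg := univ.filter (fun i : Fin n => v i < 0) with hNegdef
    have hPsum : ∑ i, P i = ∑ i ∈ Pos, P i := by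
      refine (Finset.sum_filter_of_ne fun i _ hne => ?_).symm
      by_contra hc
      push_neg at hc
      exact hne (by simp only [hPdef]; exact max_eq_right hc)
    have hNsum : ∑ i, N i = ∑ i ∈ Neg, N i := by
      refine (Finset.sum_filter_of_ne fun i _ hne => ?_).symm
      by_contra hc
      push_neg at hc
      exact hne (by simp only [hNdef]; exact max_eq_right (by linarith))
    have hcardsum : Pos.card + Neg.card ≤ n := by
      have hdisj : Disjoint Pos Neg := by
        rw [Finset.disjoint_left]
        intro i hi hj
        simp only [hPosdef, Finset.mem_filter] at hi
        simp only [hNegdef, Finset.mem_filter] at hj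
        linarith [hi.2, hj.2]
      calc Pos.card + Neg.card = (Pos ∪ Neg).card := (Finset.card_union_of_disjoint hdisj).symm
        _ ≤ (univ : Finset (Fin n)).card := Finset.card_le_univ _
        _ = n := by simp
    have hcard : (Pos.card : ℝ) * (Neg.card : ℝ) ≤ ((n / 2 : ℕ) : ℝ) * (((n + 1) / 2 : ℕ) : ℝ) := by
      have := my_nat_pq Pos.card Neg.card n hcardsum
      exact_mod_cast this
    set XP := Real.sqrt (∑ i, P i ^ 2) with hXP
    set XN := Real.sqrt (∑ i, N i ^ 2) with hXN
    have hXP2 : XP ^ 2 = ∑ i, P i ^ 2 := Real.sq_sqrt (by positivity)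
    have hXN2 : XN ^ 2 = ∑ i, N i ^ 2 := Real.sq_sqrt (by positivity)
    have hPle : ∑ i, P i ≤ Real.sqrt Pos.card * XP := by
      have h1 : (∑ i ∈ Pos, P i) ^ 2 ≤ (Pos.card : ℝ) * ∑ i ∈ Pos, P i ^ 2 := by
        have := sq_sum_le_card_mul_sum_sq (s := Pos) (f := P)
        exact_mod_cast this
      have h2 : ∑ i ∈ Pos, P i ^ 2 ≤ ∑ i, P i ^ 2 :=
        Finset.sum_le_sum_of_subset_of_nonneg (Finset.filter_subset _ _)
          (fun i _ _ => by positivity)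
      have h3 : (∑ i, P i) ^ 2 ≤ (Pos.card : ℝ) * ∑ i, P i ^ 2 := by
        rw [hPsum]
        exact h1.trans (mul_le_mul_of_nonneg_left h2 (Nat.cast_nonneg _))
      calc ∑ i, P i = Real.sqrt ((∑ i, P i) ^ 2) :=
            (Real.sqrt_sq (Finset.sum_nonneg fun i _ => hP0 i)).symm
        _ ≤ Real.sqrt ((Pos.card : ℝ) * ∑ i, P i ^ 2) := Real.sqrt_le_sqrt h3
        _ = Real.sqrt Pos.card * XP := by
            rw [Real.sqrt_mul (Nat.cast_nonneg _)]
    have hNle : ∑ i, N i ≤ Real.sqrt Neg.card * XN := by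
      have h1 : (∑ i ∈ Neg, N i) ^ 2 ≤ (Neg.card : ℝ) * ∑ i ∈ Neg, N i ^ 2 := by
        have := sq_sum_le_card_mul_sum_sq (s := Neg) (f := N)
        exact_mod_cast this
      have h2 : ∑ i ∈ Neg, N i ^ 2 ≤ ∑ i, N i ^ 2 :=
        Finset.sum_le_sum_of_subset_of_nonneg (Finset.filter_subset _ _)
          (fun i _ _ => by positivity)
      have h3 : (∑ i, N i) ^ 2 ≤ (Neg.card : ℝ) * ∑ i, N i ^ 2 := by
        rw [hNsum]
        exact h1.trans (mul_le_mul_of_nonneg_left h2 (Nat.cast_nonneg _))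
      calc ∑ i, N i = Real.sqrt ((∑ i, N i) ^ 2) :=
            (Real.sqrt_sq (Finset.sum_nonneg fun i _ => hN0 i)).symm
        _ ≤ Real.sqrt ((Neg.card : ℝ) * ∑ i, N i ^ 2) := Real.sqrt_le_sqrt h3
        _ = Real.sqrt Neg.card * XN := by
            rw [Real.sqrt_mul (Nat.cast_nonneg _)]
    have hsumv : ∑ i, v i ^ 2 = (∑ i, P i ^ 2) + ∑ i, N i ^ 2 := by
      rw [← Finset.sum_add_distrib]
      exact Finset.sum_congr rfl fun i _ => (hsq i).symm
    have hprod : 2 * ((∑ i, P i) * (∑ i, N i))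
        ≤ 2 * ((Real.sqrt Pos.card * XP) * (Real.sqrt Neg.card * XN)) := by
      have hPn : 0 ≤ ∑ i, P i := Finset.sum_nonneg fun i _ => hP0 i
      have hNn : 0 ≤ ∑ i, N i := Finset.sum_nonneg fun i _ => hN0 i
      have := mul_le_mul hPle hNle hNn (mul_nonneg (Real.sqrt_nonneg _) (Real.sqrt_nonneg _))
      linarith
    have hstep : 2 * ((Real.sqrt Pos.card * XP) * (Real.sqrt Neg.card * XN))
        ≤ Real.sqrt ((Pos.card : ℝ) * (Neg.card : ℝ)) * ((∑ i, P i ^ 2) + ∑ i, N i ^ 2) := by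
      have hxy : 2 * (XP * XN) ≤ XP ^ 2 + XN ^ 2 := by
        have := two_mul_le_add_sq XP XN; linarith
      have hsqrtPN : Real.sqrt Pos.card * Real.sqrt Neg.card
          = Real.sqrt ((Pos.card : ℝ) * (Neg.card : ℝ)) := (Real.sqrt_mul (Nat.cast_nonneg _) _).symm
      calc 2 * ((Real.sqrt Pos.card * XP) * (Real.sqrt Neg.card * XN))
          = (Real.sqrt Pos.card * Real.sqrt Neg.card) * (2 * (XP * XN)) := by ring
        _ ≤ (Real.sqrt Pos.card * Real.sqrt Neg.card) * (XP ^ 2 + XN ^ 2) :=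
            mul_le_mul_of_nonneg_left hxy (mul_nonneg (Real.sqrt_nonneg _) (Real.sqrt_nonneg _))
        _ = Real.sqrt ((Pos.card : ℝ) * (Neg.card : ℝ)) * ((∑ i, P i ^ 2) + ∑ i, N i ^ 2) := by
            rw [hsqrtPN, hXP2, hXN2]
    have hfin : Real.sqrt ((Pos.card : ℝ) * (Neg.card : ℝ)) * ((∑ i, P i ^ 2) + ∑ i, N i ^ 2)
        ≤ Real.sqrt (((n / 2 : ℕ) : ℝ) * (((n + 1) / 2 : ℕ) : ℝ)) * ∑ i, v i ^ 2 := by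
      rw [hsumv]
      exact mul_le_mul_of_nonneg_right (Real.sqrt_le_sqrt hcard)
        (by rw [← hsumv]; positivity)
    linarith
  rw [hdot, neg_mul, neg_le]
  have hw2 : w * (2 * ((∑ i, P i) * (∑ i, N i)))
      ≤ w * (Real.sqrt (((n / 2 : ℕ) : ℝ) * (((n + 1) / 2 : ℕ) : ℝ)) * ∑ i, v i ^ 2) :=
    mul_le_mul_of_nonneg_left step2 hw
  calc -(v ⬝ᵥ g *ᵥ v) ≤ w * (2 * ((∑ i, P i) * (∑ i, N i))) := step1
    _ ≤ w * (Real.sqrt (((n / 2 : ℕ) : ℝ) * (((n + 1) / 2 : ℕ) : ℝ)) * ∑ i, v i ^ 2) := hw2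
    _ = w * Real.sqrt (((n / 2 : ℕ) : ℝ) * (((n + 1) / 2 : ℕ) : ℝ)) * ∑ i, v i ^ 2 := by ring


section INV
variable {n : ℕ} (S : Matrix (Fin n) (Fin n) ℝ)

lemma my_dot_nonneg (v : Fin n → ℝ) : 0 ≤ v ⬝ᵥ v := by
  have : v ⬝ᵥ v = ∑ i, v i ^ 2 := by simp [dotProduct, sq]
  rw [this]; positivity

lemma my_isUnit (α : ℝ) (hα : 0 < α) (hq : ∀ v, α * (v ⬝ᵥ v) ≤ v ⬝ᵥ (S *ᵥ v)) :
    IsUnit S := by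
  rw [← Matrix.mulVec_injective_iff_isUnit]
  intro x y hxy
  have h0 : S *ᵥ (x - y) = 0 := by
    rw [Matrix.mulVec_sub, hxy, sub_self]
  have h1 := hq (x - y)
  rw [h0, dotProduct_zero] at h1
  have h2 := my_dot_nonneg (x - y)
  have h3 : (x - y) ⬝ᵥ (x - y) = 0 := le_antisymm (by nlinarith) h2
  have := dotProduct_self_eq_zero.1 h3
  exact sub_eq_zero.1 this

lemma my_Sinv_mul (α : ℝ) (hα : 0 < α) (hq : ∀ v, α * (v ⬝ᵥ v) ≤ v ⬝ᵥ (S *ᵥ v)) :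
    S⁻¹ * S = 1 :=
  Matrix.nonsing_inv_mul S (((Matrix.isUnit_iff_isUnit_det S).mp (my_isUnit S α hα hq)))

lemma my_mul_Sinv (α : ℝ) (hα : 0 < α) (hq : ∀ v, α * (v ⬝ᵥ v) ≤ v ⬝ᵥ (S *ᵥ v)) :
    S * S⁻¹ = 1 :=
  Matrix.mul_nonsing_inv S (((Matrix.isUnit_iff_isUnit_det S).mp (my_isUnit S α hα hq)))

/-- value formula -/
lemma my_val_formula (hsym : Sᵀ = S) (a : Fin n → ℝ) :
    a ⬝ᵥ ((S⁻¹ ^ 2) *ᵥ a) = (S⁻¹ *ᵥ a) ⬝ᵥ (S⁻¹ *ᵥ a) := by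
  have hsyminv : (S⁻¹)ᵀ = S⁻¹ := by
    rw [Matrix.transpose_nonsing_inv, hsym]
  rw [sq, ← Matrix.mulVec_mulVec, Matrix.dotProduct_mulVec]
  congr 1
  conv_lhs => rw [← hsyminv]
  rw [Matrix.vecMul_transpose]

/-- lower bound on the norm of `S *ᵥ v` -/
lemma my_norm_lb (α : ℝ) (hα : 0 < α) (hq : ∀ v, α * (v ⬝ᵥ v) ≤ v ⬝ᵥ (S *ᵥ v))
    (v : Fin n → ℝ) : α ^ 2 * (v ⬝ᵥ v) ≤ (S *ᵥ v) ⬝ᵥ (S *ᵥ v) := by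
  rcases eq_or_ne v 0 with rfl | hv
  · simp
  have hvv : 0 < v ⬝ᵥ v :=
    lt_of_le_of_ne (my_dot_nonneg v) (fun h => hv (dotProduct_self_eq_zero.1 h.symm))
  have hcs : (v ⬝ᵥ (S *ᵥ v)) ^ 2 ≤ (v ⬝ᵥ v) * ((S *ᵥ v) ⬝ᵥ (S *ᵥ v)) := by
    have := Finset.sum_mul_sq_le_sq_mul_sq Finset.univ v (S *ᵥ v)
    have e1 : v ⬝ᵥ (S *ᵥ v) = ∑ i, v i * (S *ᵥ v) i := rfl
    have e2 : v ⬝ᵥ v = ∑ i, v i ^ 2 := by simp [dotProduct, sq]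
    have e3 : (S *ᵥ v) ⬝ᵥ (S *ᵥ v) = ∑ i, (S *ᵥ v) i ^ 2 := by simp [dotProduct, sq]
    rw [e1, e2, e3]; exact this
  have h1 : α * (v ⬝ᵥ v) ≤ v ⬝ᵥ (S *ᵥ v) := hq v
  have h2 : (α * (v ⬝ᵥ v)) ^ 2 ≤ (v ⬝ᵥ (S *ᵥ v)) ^ 2 := by
    have h0 : 0 ≤ α * (v ⬝ᵥ v) := by positivity
    nlinarith
  have h3 : (α ^ 2 * (v ⬝ᵥ v)) * (v ⬝ᵥ v) ≤ ((S *ᵥ v) ⬝ᵥ (S *ᵥ v)) * (v ⬝ᵥ v) := by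
    nlinarith
  exact le_of_mul_le_mul_right h3 hvv

/-- quadratic upper bound for the inverse-square form -/
lemma my_val_ub (hsym : Sᵀ = S) (α : ℝ) (hα : 0 < α)
    (hq : ∀ v, α * (v ⬝ᵥ v) ≤ v ⬝ᵥ (S *ᵥ v)) (a : Fin n → ℝ) :
    a ⬝ᵥ ((S⁻¹ ^ 2) *ᵥ a) ≤ (a ⬝ᵥ a) / α ^ 2 := by
  rw [my_val_formula S hsym a]
  set b := S⁻¹ *ᵥ a with hb
  have hSb : S *ᵥ b = a := by
    rw [hb, Matrix.mulVec_mulVec, my_mul_Sinv S α hα hq, Matrix.one_mulVec]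
  have := my_norm_lb S α hα hq b
  rw [hSb] at this
  rw [le_div_iff₀ (by positivity)]
  linarith

/-- eigenvector value -/
lemma my_val_eig (α : ℝ) (hα : 0 < α) (hq : ∀ v, α * (v ⬝ᵥ v) ≤ v ⬝ᵥ (S *ᵥ v))
    (hsym : Sᵀ = S) (u : Fin n → ℝ) (hu : u ⬝ᵥ u = 1) (μ : ℝ) (hμ : μ ≠ 0)
    (heig : S *ᵥ u = μ • u) (t : ℝ) :
    (t • u) ⬝ᵥ ((S⁻¹ ^ 2) *ᵥ (t • u)) = t ^ 2 / μ ^ 2 := by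
  have hinvu : S⁻¹ *ᵥ u = μ⁻¹ • u := by
    have h1 : S⁻¹ *ᵥ (S *ᵥ u) = u := by
      rw [Matrix.mulVec_mulVec, my_Sinv_mul S α hα hq, Matrix.one_mulVec]
    rw [heig, Matrix.mulVec_smul] at h1
    calc S⁻¹ *ᵥ u = μ⁻¹ • (μ • (S⁻¹ *ᵥ u)) := by
          rw [smul_smul, inv_mul_cancel₀ hμ, one_smul]
      _ = μ⁻¹ • u := by rw [h1]
  rw [my_val_formula S hsym]
  rw [Matrix.mulVec_smul, hinvu, smul_smul]
  rw [smul_dotProduct, dotProduct_smul, hu]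
  field_simp
  rw [smul_eq_mul, smul_eq_mul, mul_one, ← sq, div_pow]
  field_simp


lemma my_rayleigh_le {n : ℕ} {g : Matrix (Fin n) (Fin n) ℝ} (hs : g.IsSymm)
    (lam : ℝ) (h : ∀ μ : ℝ, hasEigen g μ → μ ≤ lam) (v : Fin n → ℝ) :
    v ⬝ᵥ (g *ᵥ v) ≤ lam * (v ⬝ᵥ v) := by
  have hH : g.IsHermitian := by
    rw [Matrix.IsHermitian, Matrix.conjTranspose_eq_transpose_of_trivial]; exact hs
  have hev : ∀ i, hH.eigenvalues i ≤ lam := fun i =>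
    h _ ⟨_, fun h0 => hH.eigenvectorBasis.orthonormal.ne_zero i (by simpa using congrArg (WithLp.toLp 2) h0), hH.mulVec_eigenvectorBasis i⟩
  set U : Matrix (Fin n) (Fin n) ℝ := (hH.eigenvectorUnitary : Matrix (Fin n) (Fin n) ℝ) with hU
  have hU1 : U * star U = 1 := (Matrix.mem_unitaryGroup_iff).mp hH.eigenvectorUnitary.2
  have hU2 : star U * U = 1 := (Matrix.mem_unitaryGroup_iff').mp hH.eigenvectorUnitary.2
  set y : Fin n → ℝ := (star U) *ᵥ v with hy
  have hyU : U *ᵥ y = v := by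
    rw [hy, Matrix.mulVec_mulVec, hU1, Matrix.one_mulVec]
  have hstarT : star U = Uᵀ := by
    rw [Matrix.star_eq_conjTranspose, Matrix.conjTranspose_eq_transpose_of_trivial]
  have hdotU : ∀ z : Fin n → ℝ, v ⬝ᵥ (U *ᵥ z) = y ⬝ᵥ z := by
    intro z
    rw [Matrix.dotProduct_mulVec, hy, hstarT, Matrix.mulVec_transpose]
  have key1 : v ⬝ᵥ (g *ᵥ v) = ∑ i, hH.eigenvalues i * y i ^ 2 := by
    conv_lhs => rw [hH.spectral_theorem]
    rw [Unitary.conjStarAlgAut_apply]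
    rw [← hU, ← Matrix.mulVec_mulVec, ← Matrix.mulVec_mulVec, hdotU, ← hy]
    have hdiag : (diagonal (RCLike.ofReal ∘ hH.eigenvalues) : Matrix (Fin n) (Fin n) ℝ) *ᵥ y
        = fun i => hH.eigenvalues i * y i := by
      funext i
      rw [Matrix.mulVec_diagonal]
      simp
    rw [hdiag]
    simp [dotProduct, sq]
    exact Finset.sum_congr rfl fun i _ => by ring
  have key2 : v ⬝ᵥ v = ∑ i, y i ^ 2 := by
    rw [show v ⬝ᵥ v = v ⬝ᵥ (U *ᵥ y) by rw [hyU], hdotU y]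
    simp [dotProduct, sq]
  rw [key1, key2, Finset.mul_sum]
  exact Finset.sum_le_sum fun i _ =>
    mul_le_mul_of_nonneg_right (hev i) (sq_nonneg _)

lemma my_rayleigh_ge {n : ℕ} {g : Matrix (Fin n) (Fin n) ℝ} (hs : g.IsSymm)
    (lam : ℝ) (h : ∀ μ : ℝ, hasEigen g μ → lam ≤ μ) (v : Fin n → ℝ) :
    lam * (v ⬝ᵥ v) ≤ v ⬝ᵥ (g *ᵥ v) := by
  have hs' : (-g).IsSymm := by
    rw [Matrix.IsSymm, Matrix.transpose_neg, hs]
  have h' : ∀ μ : ℝ, hasEigen (-g) μ → μ ≤ -lam := by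
    rintro μ ⟨u, hu, heig⟩
    have : g *ᵥ u = (-μ) • u := by
      have : -(g *ᵥ u) = μ • u := by rw [← Matrix.neg_mulVec]; exact heig
      rw [neg_smul, ← this, neg_neg]
    have := h (-μ) ⟨u, hu, this⟩
    linarith
  have := my_rayleigh_le hs' (-lam) h' v
  rw [Matrix.neg_mulVec, dotProduct_neg] at this
  linarith


def gComplete (n : ℕ) (w : ℝ) : Matrix (Fin n) (Fin n) ℝ :=
  Matrix.of fun i j => if i = j then 0 else w

def gBip (n p : ℕ) (w : ℝ) : Matrix (Fin n) (Fin n) ℝ :=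
  Matrix.of fun i j => if (((i : ℕ) < p) ↔ ((j : ℕ) < p)) then 0 else w

lemma gComplete_mem {n : ℕ} {w : ℝ} (hw : 0 ≤ w) : gComplete n w ∈ Gset n w := by
  refine ⟨?_, fun i => by simp [gComplete], fun i j => ?_⟩
  · ext i j
    simp only [Matrix.transpose_apply, gComplete, Matrix.of_apply]
    by_cases h : i = j
    · simp [h]
    · rw [if_neg h, if_neg (Ne.symm h)]
  · dsimp [gComplete]
    split <;> constructor <;> first | rfl | linarith

lemma gBip_mem {n p : ℕ} {w : ℝ} (hw : 0 ≤ w) : gBip n p w ∈ Gset n w := by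
  refine ⟨?_, fun i => by simp [gBip], fun i j => ?_⟩
  · ext i j
    simp only [Matrix.transpose_apply, gBip, Matrix.of_apply]
    by_cases h : ((i : ℕ) < p) ↔ ((j : ℕ) < p)
    · rw [if_pos h, if_pos h.symm]
    · rw [if_neg h, if_neg (fun hc => h hc.symm)]
  · dsimp [gBip]
    split <;> constructor <;> first | rfl | linarith

lemma gComplete_mulVec {n : ℕ} {w : ℝ} :
    (gComplete n w) *ᵥ (fun _ => (1 : ℝ)) = (((n : ℝ) - 1) * w) • (fun _ => (1 : ℝ)) := by
  funext i
  simp only [Matrix.mulVec, dotProduct, gComplete, Matrix.of_apply, mul_one,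
    Pi.smul_apply, smul_eq_mul]
  have hsplit : ∀ j : Fin n, (if i = j then (0:ℝ) else w) = w - (if i = j then w else 0) := by
    intro j; split <;> ring
  rw [Finset.sum_congr rfl fun j _ => hsplit j, Finset.sum_sub_distrib,
    Finset.sum_ite_eq univ i (fun _ => w), if_pos (mem_univ i), Finset.sum_const]
  simp [Finset.card_univ, mul_comm]
  ring

lemma gBip_mulVec {n p q : ℕ} {w : ℝ} (hw : 0 ≤ w) (hpq : p + q = n) :
    (gBip n p w) *ᵥ (fun i : Fin n => if (i : ℕ) < p then Real.sqrt q else -Real.sqrt p)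
      = (-(w * Real.sqrt ((p : ℝ) * (q : ℝ)))) •
        (fun i : Fin n => if (i : ℕ) < p then Real.sqrt q else -Real.sqrt p) := by
  have hcard1 : (univ.filter (fun j : Fin n => (j : ℕ) < p)).card = p := by
    have : (univ.filter (fun j : Fin n => (j : ℕ) < p)).card
        = ((Finset.range n).filter (fun j => j < p)).card := by
      refine Finset.card_nbij (fun j => (j : ℕ)) ?_ ?_ ?_
      · intro j hj; simp only [Finset.mem_coe, Finset.mem_filter, Finset.mem_range] at *
        exact ⟨j.isLt, hj.2⟩
      · intro a ha b hb hab; exact Fin.ext hab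
      · intro a ha
        simp only [Finset.mem_filter, Finset.mem_range, Finset.coe_filter, Set.mem_image,
          Set.mem_setOf_eq] at *
        exact ⟨⟨a, ha.1⟩, ⟨⟨mem_univ _, ha.2⟩, rfl⟩⟩
    rw [this]
    have : (Finset.range n).filter (fun j => j < p) = Finset.range p := by
      ext a; simp only [Finset.mem_filter, Finset.mem_range]; omega
    rw [this, Finset.card_range]
  have hcard2 : (univ.filter (fun j : Fin n => ¬ (j : ℕ) < p)).card = q := by
    have := Finset.card_filter_add_card_filter_not
      (s := (univ : Finset (Fin n))) (p := fun j : Fin n => (j : ℕ) < p)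
    rw [hcard1] at this
    simp only [Finset.card_univ, Fintype.card_fin] at this
    omega
  funext i
  simp only [Matrix.mulVec, dotProduct, gBip, Matrix.of_apply, Pi.smul_apply,
    smul_eq_mul]
  by_cases hi : (i : ℕ) < p
  · rw [if_pos hi]
    have : ∀ j : Fin n, (if (((i : ℕ) < p) ↔ ((j : ℕ) < p)) then (0:ℝ) else w)
          * (if (j : ℕ) < p then Real.sqrt q else -Real.sqrt p)
        = if (j : ℕ) < p then 0 else w * (-Real.sqrt p) := by
      intro j
      by_cases hj : (j : ℕ) < p
      · rw [if_pos (iff_of_true hi hj), if_pos hj, if_pos hj, zero_mul]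
      · rw [if_neg (fun hc => hj (hc.mp hi)), if_neg hj, if_neg hj]
    rw [Finset.sum_congr rfl fun j _ => this j, Finset.sum_ite, Finset.sum_const,
      Finset.sum_const, hcard2]
    simp only [smul_zero, zero_add, nsmul_eq_mul]
    rw [show ((q:ℝ)) * (w * (-Real.sqrt p)) = -(w * ((q:ℝ) * Real.sqrt p)) by ring]
    rw [show (q:ℝ) * Real.sqrt p = Real.sqrt ((p:ℝ) * (q:ℝ)) * Real.sqrt q by
      rw [Real.sqrt_mul (by positivity)]
      rw [show Real.sqrt (p:ℝ) * Real.sqrt (q:ℝ) * Real.sqrt (q:ℝ)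
          = Real.sqrt (p:ℝ) * (Real.sqrt (q:ℝ) * Real.sqrt (q:ℝ)) by ring]
      rw [Real.mul_self_sqrt (by positivity)]
      ring]
    ring
  · rw [if_neg hi]
    have : ∀ j : Fin n, (if (((i : ℕ) < p) ↔ ((j : ℕ) < p)) then (0:ℝ) else w)
          * (if (j : ℕ) < p then Real.sqrt q else -Real.sqrt p)
        = if (j : ℕ) < p then w * Real.sqrt q else 0 := by
      intro j
      by_cases hj : (j : ℕ) < p
      · rw [if_neg (fun hc => hi (hc.mpr hj)), if_pos hj, if_pos hj]
      · rw [if_pos (iff_of_false hi hj), if_neg hj, if_neg hj, zero_mul]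
    rw [Finset.sum_congr rfl fun j _ => this j, Finset.sum_ite, Finset.sum_const,
      Finset.sum_const, hcard1]
    simp only [smul_zero, add_zero, nsmul_eq_mul]
    rw [show ((p:ℝ)) * (w * Real.sqrt q) = w * ((p:ℝ) * Real.sqrt q) by ring]
    rw [show (p:ℝ) * Real.sqrt q = Real.sqrt ((p:ℝ) * (q:ℝ)) * Real.sqrt p by
      rw [Real.sqrt_mul (by positivity)]
      rw [show Real.sqrt (p:ℝ) * Real.sqrt (q:ℝ) * Real.sqrt (p:ℝ)
          = (Real.sqrt (p:ℝ) * Real.sqrt (p:ℝ)) * Real.sqrt (q:ℝ) by ring]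
      rw [Real.mul_self_sqrt (by positivity)]]
    try ring


theorem my_aux {n : ℕ} (w φ κ : ℝ) (hκ : 0 < κ)
    (ghat : Matrix (Fin n) (Fin n) ℝ) (hghat : ghat ∈ Gset n w) (ahat : Fin n → ℝ)
    (β αs : ℝ) (hβ1 : β < 1) (hαs : 0 < αs)
    (hβq : ∀ g ∈ Gset n w, ∀ v : Fin n → ℝ, v ⬝ᵥ ((φ • g) *ᵥ v) ≤ β * (v ⬝ᵥ v))
    (hrq : ∀ v : Fin n → ℝ, v ⬝ᵥ ((φ • ghat) *ᵥ v) ≤ (1 - αs) * (v ⬝ᵥ v))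
    (gstar : Matrix (Fin n) (Fin n) ℝ) (hgstar : gstar ∈ Gset n w)
    (ustar : Fin n → ℝ) (hustar : ustar ⬝ᵥ ustar = 1)
    (hstar : (φ • gstar) *ᵥ ustar = β • ustar)
    (uhat : Fin n → ℝ) (huhat : uhat ⬝ᵥ uhat = 1)
    (hhat : (φ • ghat) *ᵥ uhat = (1 - αs) • uhat) :
    (∀ C : ℝ, 0 ≤ C →
      sSup {v : ℝ | ∃ a : Fin n → ℝ, (∑ i, (a i - ahat i) ^ 2) ≤ C ∧
        v = a ⬝ᵥ (((1 - φ • ghat)⁻¹ ^ 2).mulVec a)} ≤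
      sSup {v : ℝ | ∃ (a : Fin n → ℝ) (g : Matrix (Fin n) (Fin n) ℝ), g ∈ Gset n w ∧
        κ * (∑ i, ∑ j, (g i j - ghat i j) ^ 2) + (∑ i, (a i - ahat i) ^ 2) ≤ C ∧
        v = a ⬝ᵥ (((1 - φ • g)⁻¹ ^ 2).mulVec a)}) ∧
    Tendsto (fun C : ℝ =>
      sSup {v : ℝ | ∃ (a : Fin n → ℝ) (g : Matrix (Fin n) (Fin n) ℝ), g ∈ Gset n w ∧
        κ * (∑ i, ∑ j, (g i j - ghat i j) ^ 2) + (∑ i, (a i - ahat i) ^ 2) ≤ C ∧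
        v = a ⬝ᵥ (((1 - φ • g)⁻¹ ^ 2).mulVec a)} /
      sSup {v : ℝ | ∃ a : Fin n → ℝ, (∑ i, (a i - ahat i) ^ 2) ≤ C ∧
        v = a ⬝ᵥ (((1 - φ • ghat)⁻¹ ^ 2).mulVec a)}) atTop
      (nhds ((αs / (1 - β)) ^ 2)) := by
  have hβ' : (0:ℝ) < 1 - β := by linarith
  have hdotsq : ∀ v : Fin n → ℝ, v ⬝ᵥ v = ∑ i, v i ^ 2 := by
    intro v; simp [dotProduct, sq]
  set Ss : ℝ → Set ℝ := fun C => {v : ℝ | ∃ a : Fin n → ℝ,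
    (∑ i, (a i - ahat i) ^ 2) ≤ C ∧ v = a ⬝ᵥ (((1 - φ • ghat)⁻¹ ^ 2).mulVec a)} with hSs
  set Sj : ℝ → Set ℝ := fun C => {v : ℝ | ∃ (a : Fin n → ℝ) (g : Matrix (Fin n) (Fin n) ℝ),
    g ∈ Gset n w ∧
    κ * (∑ i, ∑ j, (g i j - ghat i j) ^ 2) + (∑ i, (a i - ahat i) ^ 2) ≤ C ∧
    v = a ⬝ᵥ (((1 - φ • g)⁻¹ ^ 2).mulVec a)} with hSj
  -- symmetry
  have hsymm : ∀ g ∈ Gset n w, (1 - φ • g)ᵀ = 1 - φ • g := by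
    intro g hg
    rw [Matrix.transpose_sub, Matrix.transpose_one, Matrix.transpose_smul, hg.1]
  -- quadratic form bounds
  have hform_joint : ∀ g ∈ Gset n w, ∀ v : Fin n → ℝ,
      (1 - β) * (v ⬝ᵥ v) ≤ v ⬝ᵥ ((1 - φ • g) *ᵥ v) := by
    intro g hg v
    rw [Matrix.sub_mulVec, Matrix.one_mulVec, dotProduct_sub]
    have := hβq g hg v
    nlinarith [this]
  have hform_hat : ∀ v : Fin n → ℝ, αs * (v ⬝ᵥ v) ≤ v ⬝ᵥ ((1 - φ • ghat) *ᵥ v) := by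
    intro v
    rw [Matrix.sub_mulVec, Matrix.one_mulVec, dotProduct_sub]
    have := hrq v
    nlinarith [this]
  -- eigen equations
  have hSstar : (1 - φ • gstar) *ᵥ ustar = (1 - β) • ustar := by
    rw [Matrix.sub_mulVec, Matrix.one_mulVec, hstar]
    funext i
    simp only [Pi.sub_apply, Pi.smul_apply, smul_eq_mul]
    ring
  have hShat : (1 - φ • ghat) *ᵥ uhat = αs • uhat := by
    rw [Matrix.sub_mulVec, Matrix.one_mulVec, hhat]
    funext i
    simp only [Pi.sub_apply, Pi.smul_apply, smul_eq_mul]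
    ring
  -- value bounds and formulas
  have hub_joint : ∀ g ∈ Gset n w, ∀ a : Fin n → ℝ,
      a ⬝ᵥ (((1 - φ • g)⁻¹ ^ 2) *ᵥ a) ≤ (a ⬝ᵥ a) / (1 - β) ^ 2 := fun g hg a =>
    my_val_ub _ (hsymm g hg) _ hβ' (hform_joint g hg) a
  have hub_hat : ∀ a : Fin n → ℝ,
      a ⬝ᵥ (((1 - φ • ghat)⁻¹ ^ 2) *ᵥ a) ≤ (a ⬝ᵥ a) / αs ^ 2 := fun a =>
    my_val_ub _ (hsymm ghat hghat) _ hαs hform_hat a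
  have hval_star : ∀ t : ℝ,
      (t • ustar) ⬝ᵥ (((1 - φ • gstar)⁻¹ ^ 2) *ᵥ (t • ustar)) = t ^ 2 / (1 - β) ^ 2 :=
    fun t => my_val_eig _ _ hβ' (hform_joint gstar hgstar) (hsymm gstar hgstar)
      ustar hustar (1 - β) (ne_of_gt hβ') hSstar t
  have hval_hat : ∀ t : ℝ,
      (t • uhat) ⬝ᵥ (((1 - φ • ghat)⁻¹ ^ 2) *ᵥ (t • uhat)) = t ^ 2 / αs ^ 2 :=
    fun t => my_val_eig _ _ hαs hform_hat (hsymm ghat hghat)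
      uhat huhat αs (ne_of_gt hαs) hShat t
  -- norms
  set A := Real.sqrt (∑ i, ahat i ^ 2) with hA
  have hA0 : 0 ≤ A := Real.sqrt_nonneg _
  have hnorm1 : ∀ (a : Fin n → ℝ) (C : ℝ), (∑ i, (a i - ahat i) ^ 2) ≤ C →
      a ⬝ᵥ a ≤ (Real.sqrt C + A) ^ 2 := by
    intro a C hC
    have h1 : a ⬝ᵥ a = ∑ i, ((a i - ahat i) + ahat i) ^ 2 := by
      rw [hdotsq]
      exact Finset.sum_congr rfl fun i _ => by ring
    rw [h1]
    refine (my_sum_sq_add_le n (fun i => a i - ahat i) ahat).trans ?_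
    rw [← hA]
    have h2 : Real.sqrt (∑ i, (a i - ahat i) ^ 2) ≤ Real.sqrt C := Real.sqrt_le_sqrt hC
    have h3 : 0 ≤ Real.sqrt (∑ i, (a i - ahat i) ^ 2) + A := by positivity
    have h4 : Real.sqrt (∑ i, (a i - ahat i) ^ 2) + A ≤ Real.sqrt C + A := by linarith
    exact pow_le_pow_left₀ h3 h4 2
  have hnorm2 : ∀ (t : ℝ), 0 ≤ t → ∀ u : Fin n → ℝ, u ⬝ᵥ u = 1 →
      (∑ i, ((t • u) i - ahat i) ^ 2) ≤ (t + A) ^ 2 := by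
    intro t ht u hu
    have h1 : ∑ i, ((t • u) i - ahat i) ^ 2 = ∑ i, ((t • u) i + (-ahat i)) ^ 2 :=
      Finset.sum_congr rfl fun i _ => by ring
    rw [h1]
    refine (my_sum_sq_add_le n (fun i => (t • u) i) (fun i => -ahat i)).trans ?_
    have h2 : ∑ i, ((t • u) i) ^ 2 = t ^ 2 := by
      have : ∑ i, ((t • u) i) ^ 2 = t ^ 2 * ∑ i, u i ^ 2 := by
        rw [Finset.mul_sum]
        exact Finset.sum_congr rfl fun i _ => by
          simp only [Pi.smul_apply, smul_eq_mul]; ring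
      rw [this, ← hdotsq, hu, mul_one]
    have h3 : ∑ i, (-ahat i) ^ 2 = ∑ i, ahat i ^ 2 :=
      Finset.sum_congr rfl fun i _ => by ring
    rw [h2, h3, Real.sqrt_sq ht, ← hA]
  -- element bounds
  have hel_joint : ∀ C : ℝ, ∀ x ∈ Sj C, x ≤ (Real.sqrt C + A) ^ 2 / (1 - β) ^ 2 := by
    rintro C x ⟨a, g, hg, hcost, rfl⟩
    have h0 : (0:ℝ) ≤ κ * (∑ i, ∑ j, (g i j - ghat i j) ^ 2) := by positivity
    have h1 : (∑ i, (a i - ahat i) ^ 2) ≤ C := by linarith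
    refine (hub_joint g hg a).trans ?_
    have hd : (0:ℝ) < (1 - β) ^ 2 := by positivity
    exact (div_le_div_iff_of_pos_right hd).mpr (hnorm1 a C h1)
  have hel_single : ∀ C : ℝ, ∀ x ∈ Ss C, x ≤ (Real.sqrt C + A) ^ 2 / αs ^ 2 := by
    rintro C x ⟨a, hcost, rfl⟩
    refine (hub_hat a).trans ?_
    have hd : (0:ℝ) < αs ^ 2 := by positivity
    exact (div_le_div_iff_of_pos_right hd).mpr (hnorm1 a C hcost)
  -- nonemptiness
  have hnes : ∀ C : ℝ, 0 ≤ C → (Ss C).Nonempty := by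
    intro C hC
    exact ⟨_, ahat, by simpa using hC, rfl⟩
  have hnej : ∀ C : ℝ, 0 ≤ C → (Sj C).Nonempty := by
    intro C hC
    exact ⟨_, ahat, ghat, hghat, by simpa using hC, rfl⟩
  -- bounded above
  have hbdds : ∀ C : ℝ, BddAbove (Ss C) := fun C =>
    ⟨(Real.sqrt C + A) ^ 2 / αs ^ 2, fun x hx => hel_single C x hx⟩
  have hbddj : ∀ C : ℝ, BddAbove (Sj C) := fun C =>
    ⟨(Real.sqrt C + A) ^ 2 / (1 - β) ^ 2, fun x hx => hel_joint C x hx⟩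
  -- part 1
  have part1 : ∀ C : ℝ, 0 ≤ C → sSup (Ss C) ≤ sSup (Sj C) := by
    intro C hC
    refine csSup_le_csSup (hbddj C) (hnes C hC) ?_
    rintro x ⟨a, hcost, rfl⟩
    exact ⟨a, ghat, hghat, by simpa using hcost, rfl⟩
  -- sup bounds
  have hVsub : ∀ C : ℝ, 0 ≤ C → sSup (Ss C) ≤ (Real.sqrt C + A) ^ 2 / αs ^ 2 :=
    fun C hC => csSup_le (hnes C hC) (hel_single C)
  have hVjub : ∀ C : ℝ, 0 ≤ C → sSup (Sj C) ≤ (Real.sqrt C + A) ^ 2 / (1 - β) ^ 2 :=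
    fun C hC => csSup_le (hnej C hC) (hel_joint C)
  have hVslb : ∀ C : ℝ, A ^ 2 ≤ C → (Real.sqrt C - A) ^ 2 / αs ^ 2 ≤ sSup (Ss C) := by
    intro C hC
    have hC0 : (0:ℝ) ≤ C := le_trans (by positivity) hC
    have hAC : A ≤ Real.sqrt C := by
      rw [show A = Real.sqrt (A ^ 2) from (Real.sqrt_sq hA0).symm]
      exact Real.sqrt_le_sqrt hC
    set t := Real.sqrt C - A with ht
    have ht0 : 0 ≤ t := by simp only [ht]; linarith
    refine le_csSup (hbdds C) ?_
    refine ⟨t • uhat, ?_, (hval_hat t).symm⟩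
    have := hnorm2 t ht0 uhat huhat
    refine this.trans ?_
    rw [show t + A = Real.sqrt C by simp only [ht]; ring]
    rw [Real.sq_sqrt hC0]
  -- joint lower bound
  set D := κ * (∑ i, ∑ j, (gstar i j - ghat i j) ^ 2) with hD
  have hD0 : 0 ≤ D := by positivity
  set B := A + Real.sqrt D with hB
  have hB0 : 0 ≤ B := by positivity
  have hVjlb : ∀ C : ℝ, B ^ 2 ≤ C → D ≤ C →
      (Real.sqrt C - B) ^ 2 / (1 - β) ^ 2 ≤ sSup (Sj C) := by
    intro C hC1 hC2
    have hC0 : (0:ℝ) ≤ C := le_trans (by positivity) hC1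
    have hBC : B ≤ Real.sqrt C := by
      rw [show B = Real.sqrt (B ^ 2) from (Real.sqrt_sq hB0).symm]
      exact Real.sqrt_le_sqrt hC1
    set t := Real.sqrt C - B with ht
    have ht0 : 0 ≤ t := by simp only [ht]; linarith
    refine le_csSup (hbddj C) ?_
    refine ⟨t • ustar, gstar, hgstar, ?_, (hval_star t).symm⟩
    have hc1 := hnorm2 t ht0 ustar hustar
    have hDC : Real.sqrt D ≤ Real.sqrt C := Real.sqrt_le_sqrt hC2
    have hsqD : Real.sqrt D ^ 2 = D := Real.sq_sqrt hD0
    have hsqC : Real.sqrt C ^ 2 = C := Real.sq_sqrt hC0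
    have hDsC : D ≤ Real.sqrt D * Real.sqrt C := by
      calc D = Real.sqrt D * Real.sqrt D := (Real.mul_self_sqrt hD0).symm
        _ ≤ Real.sqrt D * Real.sqrt C :=
          mul_le_mul_of_nonneg_left hDC (Real.sqrt_nonneg _)
    have ht2 : (t + A) ^ 2 = (Real.sqrt C - Real.sqrt D) ^ 2 := by
      rw [show t + A = Real.sqrt C - Real.sqrt D by simp only [ht, hB]; ring]
    calc D + (∑ i, ((t • ustar) i - ahat i) ^ 2) ≤ D + (t + A) ^ 2 := by linarith
      _ = D + (Real.sqrt C - Real.sqrt D) ^ 2 := by rw [ht2]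
      _ = C + 2 * (D - Real.sqrt D * Real.sqrt C) := by
          rw [sub_sq, hsqD, hsqC]; ring
      _ ≤ C := by linarith
  -- limits
  have TS : Tendsto (fun C : ℝ => sSup (Ss C) / C) atTop (nhds (1 / αs ^ 2)) := by
    have hlo : Tendsto (fun C : ℝ => (Real.sqrt C + (-A)) ^ 2 / C * (1 / αs ^ 2)) atTop
        (nhds (1 / αs ^ 2)) := by
      have h := (myTendsto_sq_ratio (-A)).mul_const (1 / αs ^ 2)
      rwa [one_mul] at h
    have hhi : Tendsto (fun C : ℝ => (Real.sqrt C + A) ^ 2 / C * (1 / αs ^ 2)) atTop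
        (nhds (1 / αs ^ 2)) := by
      have h := (myTendsto_sq_ratio A).mul_const (1 / αs ^ 2)
      rwa [one_mul] at h
    refine tendsto_of_tendsto_of_tendsto_of_le_of_le' hlo hhi ?_ ?_
    · filter_upwards [eventually_ge_atTop (max (A ^ 2) 1)] with C hC
      have hC1 : A ^ 2 ≤ C := le_trans (le_max_left _ _) hC
      have hCpos : (0:ℝ) < C := lt_of_lt_of_le (by norm_num) (le_trans (le_max_right _ _) hC)
      have := hVslb C hC1
      have heq : (Real.sqrt C + (-A)) ^ 2 / C * (1 / αs ^ 2)
          = ((Real.sqrt C - A) ^ 2 / αs ^ 2) / C := by ring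
      rw [heq]
      exact (div_le_div_iff_of_pos_right hCpos).mpr this
    · filter_upwards [eventually_ge_atTop (max 0 1)] with C hC
      have hC0 : (0:ℝ) ≤ C := le_trans (le_max_left _ _) hC
      have hCpos : (0:ℝ) < C := lt_of_lt_of_le (by norm_num) (le_trans (le_max_right _ _) hC)
      have := hVsub C hC0
      have heq : (Real.sqrt C + A) ^ 2 / C * (1 / αs ^ 2)
          = ((Real.sqrt C + A) ^ 2 / αs ^ 2) / C := by ring
      rw [heq]
      exact (div_le_div_iff_of_pos_right hCpos).mpr this
  have TJ : Tendsto (fun C : ℝ => sSup (Sj C) / C) atTop (nhds (1 / (1 - β) ^ 2)) := by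
    have hlo : Tendsto (fun C : ℝ => (Real.sqrt C + (-B)) ^ 2 / C * (1 / (1 - β) ^ 2)) atTop
        (nhds (1 / (1 - β) ^ 2)) := by
      have h := (myTendsto_sq_ratio (-B)).mul_const (1 / (1 - β) ^ 2)
      rwa [one_mul] at h
    have hhi : Tendsto (fun C : ℝ => (Real.sqrt C + A) ^ 2 / C * (1 / (1 - β) ^ 2)) atTop
        (nhds (1 / (1 - β) ^ 2)) := by
      have h := (myTendsto_sq_ratio A).mul_const (1 / (1 - β) ^ 2)
      rwa [one_mul] at h
    refine tendsto_of_tendsto_of_tendsto_of_le_of_le' hlo hhi ?_ ?_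
    · filter_upwards [eventually_ge_atTop (max (B ^ 2) (max D 1))] with C hC
      have hC1 : B ^ 2 ≤ C := le_trans (le_max_left _ _) hC
      have hC2 : D ≤ C := le_trans (le_trans (le_max_left _ _) (le_max_right _ _)) hC
      have hCpos : (0:ℝ) < C := lt_of_lt_of_le (by norm_num)
        (le_trans (le_trans (le_max_right _ _) (le_max_right _ _)) hC)
      have := hVjlb C hC1 hC2
      have heq : (Real.sqrt C + (-B)) ^ 2 / C * (1 / (1 - β) ^ 2)
          = ((Real.sqrt C - B) ^ 2 / (1 - β) ^ 2) / C := by ring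
      rw [heq]
      exact (div_le_div_iff_of_pos_right hCpos).mpr this
    · filter_upwards [eventually_ge_atTop (max 0 1)] with C hC
      have hC0 : (0:ℝ) ≤ C := le_trans (le_max_left _ _) hC
      have hCpos : (0:ℝ) < C := lt_of_lt_of_le (by norm_num) (le_trans (le_max_right _ _) hC)
      have := hVjub C hC0
      have heq : (Real.sqrt C + A) ^ 2 / C * (1 / (1 - β) ^ 2)
          = ((Real.sqrt C + A) ^ 2 / (1 - β) ^ 2) / C := by ring
      rw [heq]
      exact (div_le_div_iff_of_pos_right hCpos).mpr this
  refine ⟨part1, ?_⟩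
  have hdiv : Tendsto (fun C : ℝ => (sSup (Sj C) / C) / (sSup (Ss C) / C)) atTop
      (nhds ((1 / (1 - β) ^ 2) / (1 / αs ^ 2))) :=
    TJ.div TS (by positivity)
  have heq : (fun C : ℝ => sSup (Sj C) / sSup (Ss C)) =ᶠ[atTop]
      (fun C : ℝ => (sSup (Sj C) / C) / (sSup (Ss C) / C)) := by
    filter_upwards [eventually_gt_atTop 0] with C hC
    exact (div_div_div_same _ _ _ (ne_of_gt hC)).symm
  have hlim : (1 / (1 - β) ^ 2) / (1 / αs ^ 2) = (αs / (1 - β)) ^ 2 := by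
    field_simp
  rw [← hlim]
  exact Tendsto.congr' heq.symm hdiv


lemma my_dot_pos {n : ℕ} {v : Fin n → ℝ} (hv : v ≠ 0) : 0 < v ⬝ᵥ v := by
  have h0 : 0 ≤ v ⬝ᵥ v := by
    have : v ⬝ᵥ v = ∑ i, v i ^ 2 := by simp [dotProduct, sq]
    rw [this]; positivity
  rcases h0.lt_or_eq with h | h
  · exact h
  · exact absurd (dotProduct_self_eq_zero.1 h.symm) hv

lemma my_normalize {n : ℕ} (M : Matrix (Fin n) (Fin n) ℝ) (μ : ℝ) (u0 : Fin n → ℝ)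
    (h0 : u0 ≠ 0) (h : M *ᵥ u0 = μ • u0) :
    ∃ u : Fin n → ℝ, u ⬝ᵥ u = 1 ∧ M *ᵥ u = μ • u := by
  have hpos : 0 < u0 ⬝ᵥ u0 := my_dot_pos h0
  set c := (Real.sqrt (u0 ⬝ᵥ u0))⁻¹ with hc
  have hsx : (0:ℝ) < Real.sqrt (u0 ⬝ᵥ u0) := Real.sqrt_pos.2 hpos
  refine ⟨c • u0, ?_, ?_⟩
  · rw [smul_dotProduct, dotProduct_smul, smul_eq_mul, smul_eq_mul, ← mul_assoc, hc]
    rw [show (Real.sqrt (u0 ⬝ᵥ u0))⁻¹ * (Real.sqrt (u0 ⬝ᵥ u0))⁻¹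
        = ((Real.sqrt (u0 ⬝ᵥ u0)) * (Real.sqrt (u0 ⬝ᵥ u0)))⁻¹ by rw [mul_inv]]
    rw [Real.mul_self_sqrt hpos.le]
    exact inv_mul_cancel₀ (ne_of_gt hpos)
  · rw [Matrix.mulVec_smul, h, smul_comm]

/-- Theorem 3: joint intervention dominates single intervention, `V*_joint ≥ V*_single`,
and the asymptotic welfare ratio is `((1 − φλ₁(ĝ))/(1 − (n−1)φw̄))²` for `φ > 0` and
`((1 − φλₙ(ĝ))/(1 + φw̄√(⌊n/2⌋⌈n/2⌉)))²` for `φ < 0`. -/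
theorem stmt19 (n : ℕ) (hn : 2 ≤ n) (w φ κ : ℝ) (hw : 0 < w) (hφ : φ ≠ 0) (hκ : 0 < κ)
    (hpos : 0 < φ → w < 1 / (φ * ((n : ℝ) - 1)))
    (hnegEven : φ < 0 → Even n → w < -2 / (φ * (n : ℝ)))
    (hnegOdd : φ < 0 → Odd n → w < -2 / (φ * Real.sqrt ((n : ℝ) ^ 2 - 1)))
    (ghat : Matrix (Fin n) (Fin n) ℝ) (hghat : ghat ∈ Gset n w) (ahat : Fin n → ℝ)
    (lam1 lamn : ℝ)
    (hlam1 : hasEigen ghat lam1) (hmax : ∀ μ : ℝ, hasEigen ghat μ → μ ≤ lam1)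
    (hlamn : hasEigen ghat lamn) (hmin : ∀ μ : ℝ, hasEigen ghat μ → lamn ≤ μ) :
    let Vsingle : ℝ → ℝ := fun C =>
      sSup {v : ℝ | ∃ a : Fin n → ℝ, (∑ i, (a i - ahat i) ^ 2) ≤ C ∧
        v = a ⬝ᵥ (((1 - φ • ghat)⁻¹ ^ 2).mulVec a)}
    let Vjoint : ℝ → ℝ := fun C =>
      sSup {v : ℝ | ∃ (a : Fin n → ℝ) (g : Matrix (Fin n) (Fin n) ℝ),
        g ∈ Gset n w ∧
        κ * (∑ i, ∑ j, (g i j - ghat i j) ^ 2) + (∑ i, (a i - ahat i) ^ 2) ≤ C ∧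
        v = a ⬝ᵥ (((1 - φ • g)⁻¹ ^ 2).mulVec a)}
    (∀ C : ℝ, 0 ≤ C → Vsingle C ≤ Vjoint C) ∧
    (0 < φ →
      Filter.Tendsto (fun C : ℝ => Vjoint C / Vsingle C) Filter.atTop
        (nhds (((1 - φ * lam1) / (1 - ((n : ℝ) - 1) * φ * w)) ^ 2))) ∧
    (φ < 0 →
      Filter.Tendsto (fun C : ℝ => Vjoint C / Vsingle C) Filter.atTop
        (nhds (((1 - φ * lamn) /
          (1 + φ * w * Real.sqrt (((n / 2 : ℕ) : ℝ) * (((n + 1) / 2 : ℕ) : ℝ)))) ^ 2))) := by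
  intro Vsingle Vjoint
  have hn1 : (1:ℝ) ≤ (n : ℝ) - 1 := by
    have : (2:ℝ) ≤ (n:ℝ) := by exact_mod_cast hn
    linarith
  rcases hφ.lt_or_gt with hneg | hposφ
  · -- φ < 0
    set s := Real.sqrt (((n / 2 : ℕ) : ℝ) * (((n + 1) / 2 : ℕ) : ℝ)) with hs
    have hs0 : 0 ≤ s := Real.sqrt_nonneg _
    set β : ℝ := -(φ * w * s) with hβ
    set αs : ℝ := 1 - φ * lamn with hαs
    have hn0R : (0:ℝ) < (n:ℝ) := by
      have : (2:ℝ) ≤ (n:ℝ) := by exact_mod_cast hn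
      linarith
    -- β < 1
    have hβ1 : β < 1 := by
      rcases Nat.even_or_odd n with he | ho
      · obtain ⟨m, hm⟩ := he
        have hm1 : 1 ≤ m := by omega
        have e1 : n / 2 = m := by omega
        have e2 : (n + 1) / 2 = m := by omega
        have hseq : s = (m : ℝ) := by
          rw [hs, e1, e2, Real.sqrt_mul_self (by positivity)]
        have hw2 := hnegEven hneg ⟨m, hm⟩
        have hd : -2 / (φ * (n:ℝ)) = 2 / ((-φ) * (n:ℝ)) := by
          rw [div_eq_div_iff (by exact mul_ne_zero (ne_of_lt hneg) (ne_of_gt hn0R))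
            (by exact ne_of_gt (mul_pos (by linarith) hn0R))]
          ring
        rw [hd] at hw2
        have hpos2 : 0 < (-φ) * (n:ℝ) := mul_pos (by linarith) hn0R
        have hlt := (lt_div_iff₀ hpos2).1 hw2
        have hnm : (n:ℝ) = 2 * (m:ℝ) := by
          rw [hm]; push_cast; ring
        rw [hβ, hseq]
        rw [hnm] at hlt
        nlinarith
      · obtain ⟨m, hm⟩ := ho
        have hm1 : 1 ≤ m := by omega
        have hmR : (1:ℝ) ≤ (m:ℝ) := by exact_mod_cast hm1
        have e1 : n / 2 = m := by omega
        have e2 : (n + 1) / 2 = m + 1 := by omega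
        have hx0 : (0:ℝ) < (m:ℝ) * (((m+1 : ℕ)):ℝ) := by
          have : (0:ℝ) < ((m+1 : ℕ):ℝ) := by positivity
          nlinarith
        have hseq : s = Real.sqrt ((m:ℝ) * (((m+1 : ℕ)):ℝ)) := by
          rw [hs, e1, e2]
        have hs_pos : 0 < s := by rw [hseq]; exact Real.sqrt_pos.2 hx0
        have hnn : ((n:ℝ))^2 - 1 = 4 * ((m:ℝ) * (((m+1 : ℕ)):ℝ)) := by
          have hcast : (n:ℝ) = 2*(m:ℝ)+1 := by rw [hm]; push_cast; ring
          rw [hcast]; push_cast; ring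
        have hsq4 : Real.sqrt ((n:ℝ)^2 - 1) = 2 * s := by
          rw [hnn, hseq]
          rw [show (4:ℝ) * ((m:ℝ) * (((m+1 : ℕ)):ℝ))
              = (2 * Real.sqrt ((m:ℝ) * (((m+1 : ℕ)):ℝ)))^2 by
            rw [mul_pow, Real.sq_sqrt hx0.le]; ring]
          rw [Real.sqrt_sq (by positivity)]
        have hw2 := hnegOdd hneg ⟨m, hm⟩
        rw [hsq4] at hw2
        have hd : -2 / (φ * (2*s)) = 2 / ((-φ) * (2*s)) := by
          rw [div_eq_div_iff (by exact mul_ne_zero (ne_of_lt hneg) (by positivity))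
            (by exact ne_of_gt (mul_pos (by linarith) (by positivity)))]
          ring
        rw [hd] at hw2
        have hpos2 : 0 < (-φ) * (2*s) := mul_pos (by linarith) (by positivity)
        have hlt := (lt_div_iff₀ hpos2).1 hw2
        rw [hβ]
        nlinarith
    -- quadratic bounds
    have hβq : ∀ g ∈ Gset n w, ∀ v : Fin n → ℝ, v ⬝ᵥ ((φ • g) *ᵥ v) ≤ β * (v ⬝ᵥ v) := by
      intro g hg v
      rw [Matrix.smul_mulVec, dotProduct_smul, smul_eq_mul]
      have h1 := my_quad_ge hw.le hg v
      calc φ * (v ⬝ᵥ (g *ᵥ v)) ≤ φ * (-(w * s) * (v ⬝ᵥ v)) := by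
            rw [← hs] at h1
            exact mul_le_mul_of_nonpos_left h1 hneg.le
        _ = β * (v ⬝ᵥ v) := by rw [hβ]; ring
    -- lamn lower bound
    have hlamn_lb : -(w * s) ≤ lamn := by
      obtain ⟨u0, h0, heig⟩ := hlamn
      have hpos0 : 0 < u0 ⬝ᵥ u0 := my_dot_pos h0
      have h1 : u0 ⬝ᵥ (ghat *ᵥ u0) = lamn * (u0 ⬝ᵥ u0) := by
        rw [heig, dotProduct_smul, smul_eq_mul]
      have h2 := my_quad_ge hw.le hghat u0
      rw [← hs, h1] at h2
      exact le_of_mul_le_mul_right (by linarith) hpos0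
    have hαspos : 0 < αs := by
      have : φ * lamn ≤ φ * (-(w * s)) := mul_le_mul_of_nonpos_left hlamn_lb hneg.le
      have hβφ : φ * (-(w * s)) = β := by rw [hβ]; ring
      rw [hαs]; rw [hβφ] at this; linarith
    have hrq : ∀ v : Fin n → ℝ, v ⬝ᵥ ((φ • ghat) *ᵥ v) ≤ (1 - αs) * (v ⬝ᵥ v) := by
      intro v
      rw [Matrix.smul_mulVec, dotProduct_smul, smul_eq_mul]
      have h1 := my_rayleigh_ge hghat.1 lamn hmin v
      calc φ * (v ⬝ᵥ (ghat *ᵥ v)) ≤ φ * (lamn * (v ⬝ᵥ v)) :=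
            mul_le_mul_of_nonpos_left h1 hneg.le
        _ = (1 - αs) * (v ⬝ᵥ v) := by rw [hαs]; ring
    -- extremal graph
    have hpq : n / 2 + (n + 1) / 2 = n := by omega
    have hstar0 : (gBip n (n / 2) w) *ᵥ
        (fun i : Fin n => if (i : ℕ) < n / 2 then Real.sqrt ((n + 1) / 2 : ℕ)
          else -Real.sqrt (n / 2 : ℕ))
        = (-(w * s)) • (fun i : Fin n => if (i : ℕ) < n / 2 then Real.sqrt ((n + 1) / 2 : ℕ)
          else -Real.sqrt (n / 2 : ℕ)) := by
      have := gBip_mulVec (n := n) (p := n / 2) (q := (n + 1) / 2) hw.le hpq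
      rw [← hs] at this
      exact this
    have hustar0_ne : (fun i : Fin n => if (i : ℕ) < n / 2 then Real.sqrt ((n + 1) / 2 : ℕ)
        else -Real.sqrt (n / 2 : ℕ)) ≠ 0 := by
      intro hcon
      have h0n : (0 : ℕ) < n := by omega
      have := congrFun hcon ⟨0, h0n⟩
      simp only [Pi.zero_apply] at this
      rw [if_pos (by show (0:ℕ) < n / 2; omega)] at this
      have hq1 : (1:ℝ) ≤ ((n + 1) / 2 : ℕ) := by
        have : 1 ≤ (n + 1) / 2 := by omega
        exact_mod_cast this
      have := Real.sqrt_pos.2 (by linarith : (0:ℝ) < ((n + 1) / 2 : ℕ))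
      linarith [this]
    obtain ⟨ustar, hustar, hstar⟩ := my_normalize (φ • gBip n (n / 2) w) β _ hustar0_ne
      (by rw [Matrix.smul_mulVec, hstar0, smul_smul, hβ]
          congr 1; ring)
    -- eigenvector for ghat
    obtain ⟨u0, h0, heig0⟩ := hlamn
    obtain ⟨uhat, huhat, hhat⟩ := my_normalize (φ • ghat) (1 - αs) u0 h0
      (by rw [Matrix.smul_mulVec, heig0, smul_smul, hαs]
          congr 1; ring)
    have aux := my_aux w φ κ hκ ghat hghat ahat β αs hβ1 hαspos hβq hrq
      (gBip n (n / 2) w) (gBip_mem hw.le) ustar hustar hstar uhat huhat hhat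
    refine ⟨aux.1, fun h => absurd h (not_lt.2 hneg.le), fun _ => ?_⟩
    have hrw : (1 + φ * w * s) = 1 - β := by rw [hβ]; ring
    rw [hrw]
    exact aux.2
  · -- φ > 0
    set β : ℝ := ((n : ℝ) - 1) * φ * w with hβ
    set αs : ℝ := 1 - φ * lam1 with hαs
    have hφn : 0 < φ * ((n:ℝ) - 1) := mul_pos hposφ (by linarith)
    have hβ1 : β < 1 := by
      have h1 := hpos hposφ
      have hlt := (lt_div_iff₀ hφn).1 h1
      rw [hβ]; nlinarith
    have hβq : ∀ g ∈ Gset n w, ∀ v : Fin n → ℝ, v ⬝ᵥ ((φ • g) *ᵥ v) ≤ β * (v ⬝ᵥ v) := by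
      intro g hg v
      rw [Matrix.smul_mulVec, dotProduct_smul, smul_eq_mul]
      have h1 := my_quad_le hw.le hg v
      calc φ * (v ⬝ᵥ (g *ᵥ v)) ≤ φ * (((n:ℝ) - 1) * w * (v ⬝ᵥ v)) :=
            mul_le_mul_of_nonneg_left h1 hposφ.le
        _ = β * (v ⬝ᵥ v) := by rw [hβ]; ring
    have hl1 : lam1 ≤ ((n:ℝ) - 1) * w := by
      obtain ⟨u0, h0, heig⟩ := hlam1
      have hpos0 : 0 < u0 ⬝ᵥ u0 := my_dot_pos h0
      have h1 : u0 ⬝ᵥ (ghat *ᵥ u0) = lam1 * (u0 ⬝ᵥ u0) := by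
        rw [heig, dotProduct_smul, smul_eq_mul]
      have h2 := my_quad_le hw.le hghat u0
      rw [h1] at h2
      exact le_of_mul_le_mul_right (by linarith) hpos0
    have hαspos : 0 < αs := by
      have h2 : φ * lam1 ≤ φ * (((n:ℝ) - 1) * w) := mul_le_mul_of_nonneg_left hl1 hposφ.le
      have hββ : φ * (((n:ℝ) - 1) * w) = β := by rw [hβ]; ring
      rw [hαs]; rw [hββ] at h2; linarith
    have hrq : ∀ v : Fin n → ℝ, v ⬝ᵥ ((φ • ghat) *ᵥ v) ≤ (1 - αs) * (v ⬝ᵥ v) := by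
      intro v
      rw [Matrix.smul_mulVec, dotProduct_smul, smul_eq_mul]
      have h1 := my_rayleigh_le hghat.1 lam1 hmax v
      calc φ * (v ⬝ᵥ (ghat *ᵥ v)) ≤ φ * (lam1 * (v ⬝ᵥ v)) :=
            mul_le_mul_of_nonneg_left h1 hposφ.le
        _ = (1 - αs) * (v ⬝ᵥ v) := by rw [hαs]; ring
    have hone_ne : (fun _ : Fin n => (1:ℝ)) ≠ 0 := by
      intro hcon
      have h0n : (0 : ℕ) < n := by omega
      have := congrFun hcon ⟨0, h0n⟩
      simp at this
    obtain ⟨ustar, hustar, hstar⟩ := my_normalize (φ • gComplete n w) β _ hone_ne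
      (by rw [Matrix.smul_mulVec, gComplete_mulVec, smul_smul, hβ]
          congr 1; ring)
    obtain ⟨u0, h0, heig0⟩ := hlam1
    obtain ⟨uhat, huhat, hhat⟩ := my_normalize (φ • ghat) (1 - αs) u0 h0
      (by rw [Matrix.smul_mulVec, heig0, smul_smul, hαs]
          congr 1; ring)
    have aux := my_aux w φ κ hκ ghat hghat ahat β αs hβ1 hαspos hβq hrq
      (gComplete n w) (gComplete_mem hw.le) ustar hustar hstar uhat huhat hhat
    exact ⟨aux.1, fun _ => aux.2, fun h => absurd h (not_lt.2 hposφ.le)⟩
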